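/- Two distinct involutory automorphisms of a Hamiltonian cycle system of odd order have distinct fixed points; equivalently, an involutory automorphism of an HCS of odd order is uniquely determined by its fixed point. -/

import Mathlib

open Pointwise

variable {V : Type*}

/-- The action of a permutation on a simple graph by relabelling vertices. -/
instance permGraphAction : MulAction (Equiv.Perm V) (SimpleGraph V) where
  smul σ H := H.map σ.toEmbedding
  one_smul H := by
    show H.map (1 : Equiv.Perm V).toEmbedding = H
    ext a b
    simp [SimpleGraph.map_adj]
  mul_smul σ τ H := by
    ext a b
    show (H.map (σ * τ).toEmbedding).Adj a b ↔ ((H.map τ.toEmbedding).map σ.toEmbedding).Adj a b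
    simp only [SimpleGraph.map_adj, Equiv.coe_toEmbedding, Equiv.Perm.coe_mul,
      Function.comp_apply]
    constructor
    · rintro ⟨hab, u, v, h, rfl, rfl⟩
      exact ⟨hab, τ u, τ v, ⟨fun e => hab (by simp [e]), u, v, h, rfl, rfl⟩, rfl, rfl⟩
    · rintro ⟨hab, -, -, ⟨-, u, v, h, rfl, rfl⟩, rfl, rfl⟩
      exact ⟨hab, u, v, h, rfl, rfl⟩

lemma perm_smul_graph (σ : Equiv.Perm V) (H : SimpleGraph V) :
    σ • H = H.map σ.toEmbedding := rfl

/-- A Hamiltonian cycle of the complete graph on `V`: a connected, 2-regular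
(spanning) subgraph. -/
def IsHamCycle [Fintype V] (H : SimpleGraph V) : Prop :=
  H.Connected ∧ ∀ v : V, (H.neighborSet v).ncard = 2

/-- A Hamiltonian cycle system: a set of Hamiltonian cycles whose edge sets
partition the edge set of the complete graph. -/
def IsHCS [Fintype V] (𝓗 : Set (SimpleGraph V)) : Prop :=
  (∀ H ∈ 𝓗, IsHamCycle H) ∧
    ∀ e ∈ (⊤ : SimpleGraph V).edgeSet, ∃! H, H ∈ 𝓗 ∧ e ∈ H.edgeSet

/-- The full automorphism group of a Hamiltonian cycle system, as the subgroup
of vertex permutations preserving the set of cycles. -/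
def autHCS (𝓗 : Set (SimpleGraph V)) : Subgroup (Equiv.Perm V) :=
  MulAction.stabilizer (Equiv.Perm V) 𝓗

/-- The cycle graph traced by a map from `ZMod m` (consecutive residues are adjacent). -/
def cycleOn {W : Type*} (m : ℕ) (f : ZMod m → W) : SimpleGraph W :=
  SimpleGraph.fromRel (fun a b => ∃ i : ZMod m, f i = a ∧ f (i + 1) = b)

lemma cycle_aux_exists_cycle_equiv [Fintype V] {H : SimpleGraph V} (hc : H.Connected)
    (hr : ∀ v : V, (H.neighborSet v).ncard = 2) :
    ∃ g : ZMod (Fintype.card V) ≃ V,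
      ∀ i j, H.Adj (g i) (g j) ↔ (j = i + 1 ∨ i = j + 1) := by
  classical
  -- "other neighbor" function
  have hex : ∀ u v : V, H.Adj u v → ∃ w, H.Adj u w ∧ w ≠ v := by
    intro u v huv
    obtain ⟨b, c, hbc, hN⟩ := Set.ncard_eq_two.mp (hr u)
    have hv : v ∈ H.neighborSet u := huv
    rw [hN] at hv
    rcases hv with rfl | rfl
    · exact ⟨c, by have : c ∈ H.neighborSet u := by rw [hN]; simp
                   exact this, hbc.symm⟩
    · exact ⟨b, by have : b ∈ H.neighborSet u := by rw [hN]; simp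
                   exact this, hbc⟩
  set other : V → V → V := fun u v =>
    if h : ∃ w, H.Adj u w ∧ w ≠ v then h.choose else v with hother
  have hO : ∀ u v : V, H.Adj u v →
      H.Adj u (other u v) ∧ other u v ≠ v ∧
        ∀ w, H.Adj u w → w ≠ v → w = other u v := by
    intro u v huv
    obtain ⟨b, c, hbc, hN⟩ := Set.ncard_eq_two.mp (hr u)
    have h := hex u v huv
    have h1 : other u v = h.choose := by simp [hother, dif_pos h]
    obtain ⟨hw1, hw2⟩ := h.choose_spec
    refine ⟨h1 ▸ hw1, h1 ▸ hw2, ?_⟩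
    intro w hw hwv
    -- u has exactly two neighbors; v, w, h.choose are neighbors with w ≠ v, choose ≠ v
    have hv : v ∈ ({b, c} : Set V) := hN ▸ huv
    have hw' : w ∈ ({b, c} : Set V) := hN ▸ hw
    have hc' : h.choose ∈ ({b, c} : Set V) := hN ▸ hw1
    rw [h1]
    rcases hv with rfl | rfl
    · rcases hw' with rfl | rfl
      · exact absurd rfl hwv
      · rcases hc' with h' | h'
        · exact absurd h' hw2
        · exact h'.symm
    · rcases hw' with rfl | rfl
      · rcases hc' with h' | h'
        · exact h'.symm
        · exact absurd h' hw2
      · exact absurd rfl hwv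
  have hNbr : ∀ u v : V, H.Adj u v → ∀ w, H.Adj u w ↔ (w = v ∨ w = other u v) := by
    intro u v huv w
    obtain ⟨h1, h2, h3⟩ := hO u v huv
    constructor
    · intro hw
      by_cases hwv : w = v
      · exact Or.inl hwv
      · exact Or.inr (h3 w hw hwv)
    · rintro (rfl | rfl)
      · exact huv
      · exact h1
  -- starting vertices
  have : Nonempty V := hc.nonempty
  obtain ⟨v₀⟩ := this
  obtain ⟨b, c, hbc, hN⟩ := Set.ncard_eq_two.mp (hr v₀)
  have hv₁ : H.Adj v₀ b := by
    have : b ∈ H.neighborSet v₀ := by rw [hN]; simp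
    exact this
  set v₁ := b with hv1def
  -- the trajectory
  set T2 : ℕ → V × V := fun k =>
    Nat.rec (v₀, v₁) (fun _ p => (p.2, other p.2 p.1)) k with hT2
  set F : ℕ → V := fun k => (T2 k).1 with hF
  have hF0 : F 0 = v₀ := rfl
  have hF1 : F 1 = v₁ := rfl
  have hsnd : ∀ k, (T2 k).2 = F (k + 1) := by
    intro k; rfl
  have hrec : ∀ k, F (k + 2) = other (F (k + 1)) (F k) := by
    intro k; rfl
  have hadjF : ∀ k, H.Adj (F k) (F (k + 1)) := by
    intro k
    induction k with
    | zero => exact hv₁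
    | succ k ih =>
      have := (hO _ _ ih.symm).1
      rw [show k + 1 + 1 = k + 2 by ring, hrec k]
      exact this
  have hne2 : ∀ k, F (k + 2) ≠ F k := by
    intro k
    have := (hO _ _ (hadjF k).symm).2.1
    rw [hrec k]; exact this
  have hback : ∀ k, F k = other (F (k + 1)) (F (k + 2)) := by
    intro k
    have h1 : H.Adj (F (k + 1)) (F (k + 2)) := hadjF (k + 1)
    exact (hO _ _ h1).2.2 (F k) (hadjF k).symm (fun h => hne2 k h.symm)
  -- forward propagation of a pair coincidence
  have hfwd : ∀ i j, F i = F j → F (i + 1) = F (j + 1) →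
      ∀ k, F (i + k) = F (j + k) := by
    intro i j h0 h1 k
    induction k using Nat.twoStepInduction with
    | zero => simpa using h0
    | one => simpa using h1
    | more k ih1 ih2 =>
      have e1 : i + (k + 2) = (i + k) + 2 := by ring
      have e2 : j + (k + 2) = (j + k) + 2 := by ring
      rw [e1, e2, hrec, hrec]
      rw [show (i+k)+1 = i+(k+1) by ring, show (j+k)+1 = j+(k+1) by ring, ih2, ih1]
  -- backward propagation of a pair coincidence
  have hbwd : ∀ i j, i ≤ j → F i = F j → F (i + 1) = F (j + 1) →
      ∀ k, k ≤ i → F (i - k) = F (j - k) ∧ F (i - k + 1) = F (j - k + 1) := by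
    intro i j hij h0 h1 k
    induction k with
    | zero => intro _; simpa using ⟨h0, h1⟩
    | succ k ih =>
      intro hki
      obtain ⟨A, B⟩ := ih (by omega)
      have hp : 1 ≤ i - k := by omega
      have hq : 1 ≤ j - k := by omega
      have e1 : i - (k+1) = (i - k) - 1 := by omega
      have e2 : j - (k+1) = (j - k) - 1 := by omega
      have e3 : (i - k) - 1 + 1 = i - k := by omega
      have e4 : (j - k) - 1 + 1 = j - k := by omega
      have e5 : (i - k) - 1 + 2 = i - k + 1 := by omega
      have e6 : (j - k) - 1 + 2 = j - k + 1 := by omega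
      have hb1 := hback ((i - k) - 1)
      rw [e3, e5] at hb1
      have hb2 := hback ((j - k) - 1)
      rw [e4, e6] at hb2
      constructor
      · rw [e1, e2, hb1, hb2, A, B]
      · rw [e1, e2, e3, e4, A]
  -- a collision propagates forward (reversal is impossible)
  have hcol : ∀ i j, i < j → F i = F j → F (i + 1) = F (j + 1) := by
    intro i j hij h0
    have hj1 : 1 ≤ j := by omega
    have hb := hback (j - 1)
    rw [show j - 1 + 1 = j by omega, show j - 1 + 2 = j + 1 by omega] at hb
    -- neighbors of F j are F (j+1) and F (j-1)
    have hmem := (hNbr (F j) (F (j + 1)) (hadjF j) (F (i + 1))).mp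
      (by rw [← h0]; exact (hadjF i))
    rw [← hb] at hmem
    rcases hmem with h1 | h1
    · exact h1
    -- reversal case: derive a contradiction
    exfalso
    rcases Nat.eq_or_lt_of_le hij with rfl | hij2
    · rw [show i + 1 - 1 = i from rfl] at h1
      exact H.irrefl (h1 ▸ hadjF i)
    have hij2 : i + 2 ≤ j := hij2
    have hrev : ∀ k, i + k + 1 ≤ j →
        F (i + k) = F (j - k) ∧ F (i + k + 1) = F (j - k - 1) := by
      intro k
      induction k with
      | zero => intro _; exact ⟨by simpa using h0, by simpa using h1⟩
      | succ k ih =>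
        intro hk
        obtain ⟨A, B⟩ := ih (by omega)
        have hjk : i + 2 + k ≤ j := by omega
        have hb2 := hback (j - k - 2)
        rw [show j - k - 2 + 1 = j - k - 1 by omega,
            show j - k - 2 + 2 = j - k by omega] at hb2
        constructor
        · rw [show i + (k+1) = i + k + 1 by ring, show j - (k+1) = j - k - 1 by omega, B]
        · rw [show i + (k+1) + 1 = (i + k) + 2 by ring, hrec,
              show j - (k+1) - 1 = j - k - 2 by omega, hb2, A, B]
    rcases Nat.even_or_odd (j - i) with ⟨e, he⟩ | ⟨e, he⟩
    · -- j - i = 2e, e ≥ 1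
      have he1 : 1 ≤ e := by omega
      obtain ⟨A, B⟩ := hrev (e - 1) (by omega)
      have : F (i + (e-1) + 2) = F (i + (e-1)) := by
        rw [show i + (e-1) + 2 = j - (e-1) by omega] at *
        exact A.symm
      exact hne2 _ this
    · -- j - i = 2e+1, e ≥ 1
      obtain ⟨A, B⟩ := hrev e (by omega)
      have : F (i + e + 1) = F (i + e) := by
        rw [show j - e - 1 = i + e by omega] at B
        exact B
      exact H.irrefl (this ▸ hadjF (i + e))
  -- existence of a period
  have hexper : ∃ d, 0 < d ∧ ∀ k, F (k + d) = F k := by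
    have hcard : (Finset.range (Fintype.card V + 1)).card = Fintype.card V + 1 :=
      Finset.card_range _
    obtain ⟨i, hi, j, hj, hne, hFij⟩ :=
      Finset.exists_ne_map_eq_of_card_lt_of_maps_to
        (by rw [hcard]; exact Nat.lt_succ_self _)
        (fun x _ => Finset.mem_univ (F x))
    rcases Nat.lt_or_ge i j with hij | hij
    · refine ⟨j - i, by omega, ?_⟩
      have h1 := hcol i j hij hFij
      -- move the pair coincidence down to 0
      obtain ⟨A, B⟩ := hbwd i j (le_of_lt hij) hFij h1 i (le_refl i)
      rw [Nat.sub_self] at A B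
      intro k
      have := hfwd 0 (j - i) A B k
      simpa [Nat.add_comm] using this.symm
    · have hij : j < i := by omega
      refine ⟨i - j, by omega, ?_⟩
      have h1 := hcol j i hij hFij.symm
      obtain ⟨A, B⟩ := hbwd j i (le_of_lt hij) hFij.symm h1 j (le_refl j)
      rw [Nat.sub_self] at A B
      intro k
      have := hfwd 0 (i - j) A B k
      simpa [Nat.add_comm] using this.symm
  set T := Nat.find hexper with hTdef
  obtain ⟨hTpos, hTper⟩ : 0 < T ∧ ∀ k, F (k + T) = F k := Nat.find_spec hexper
  -- injectivity on a window of length T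
  have hinj : ∀ i j, i < T → j < T → F i = F j → i = j := by
    intro i j hi hj hij
    by_contra hne
    -- wlog i < j
    have key : ∀ i j, i < j → j < T → F i = F j → False := by
      intro i j hij hj h0
      have h1 := hcol i j hij h0
      obtain ⟨A, B⟩ := hbwd i j (le_of_lt hij) h0 h1 i (le_refl i)
      rw [Nat.sub_self] at A B
      have hper : ∀ k, F (k + (j - i)) = F k := by
        intro k
        have := hfwd 0 (j - i) A B k
        simpa [Nat.add_comm] using this.symm
      exact Nat.find_min hexper (by omega : j - i < T) ⟨by omega, hper⟩
    rcases Nat.lt_or_ge i j with h | h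
    · exact key i j h hj hij
    · exact key j i (by omega) hi hij.symm
  have hmulti : ∀ k c, F (k + c * T) = F k := by
    intro k c
    induction c with
    | zero => simp
    | succ c ih =>
      have : k + (c+1) * T = (k + c * T) + T := by ring
      rw [this, hTper, ih]
  have hmod : ∀ k, F k = F (k % T) := by
    intro k
    conv_lhs => rw [show k = k % T + (k / T) * T by
      rw [Nat.mod_add_div' k T]]
    exact hmulti _ _
  -- surjectivity
  have hclosed : ∀ v w, v ∈ Set.range F → H.Adj v w → w ∈ Set.range F := by
    rintro v w ⟨k, rfl⟩ hadj
    have hk' : F (k + T) = F k := hTper k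
    have hb := hback (k + T - 1)
    rw [show k + T - 1 + 1 = k + T by omega, show k + T - 1 + 2 = k + T + 1 by omega] at hb
    have hmem := (hNbr (F (k + T)) (F (k + T + 1)) (hadjF (k + T)) w).mp
      (by rw [hk']; exact hadj)
    rw [← hb] at hmem
    rcases hmem with rfl | rfl
    · exact ⟨k + T + 1, rfl⟩
    · exact ⟨k + T - 1, rfl⟩
  have hsurj : ∀ v : V, ∃ k, F k = v := by
    intro v
    have hreach : H.Reachable v₀ v := hc.preconnected v₀ v
    obtain ⟨p⟩ := hreach
    have : ∀ (u w : V) (p : H.Walk u w), u ∈ Set.range F → w ∈ Set.range F := by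
      intro u w p
      induction p with
      | nil => exact id
      | cons hadj p ih => intro hu; exact ih (hclosed _ _ hu hadj)
    exact this v₀ v p ⟨0, hF0⟩
  -- T = card V
  have himg : Finset.image F (Finset.range T) = Finset.univ := by
    apply Finset.eq_univ_of_forall
    intro v
    obtain ⟨k, hk⟩ := hsurj v
    rw [Finset.mem_image]
    exact ⟨k % T, Finset.mem_range.mpr (Nat.mod_lt _ hTpos), by rw [← hmod, hk]⟩
  have hTcard : T = Fintype.card V := by
    have h1 : (Finset.image F (Finset.range T)).card = T := by
      rw [Finset.card_image_of_injOn, Finset.card_range]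
      intro i hi j hj hij
      exact hinj i j (Finset.mem_range.mp hi) (Finset.mem_range.mp hj) hij
    rw [himg, Finset.card_univ] at h1
    exact h1.symm
  have hm0 : 0 < Fintype.card V := by omega
  haveI : NeZero (Fintype.card V) := ⟨by omega⟩
  set m := Fintype.card V with hm
  -- key: F factors through residues mod m
  have hFmod : ∀ k l, k % m = l % m → F k = F l := by
    intro k l hkl
    rw [hmod k, hmod l, hTcard, hkl]
  have hval : ∀ i : ZMod m, ∀ k : ℕ, (k : ZMod m) = i → F k = F i.val := by
    intro i k hk
    apply hFmod
    have h1 : ((k : ℕ) : ZMod m).val = k % m := ZMod.val_natCast m k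
    rw [hk] at h1
    rw [← h1, Nat.mod_eq_of_lt (ZMod.val_lt i)]
  set g0 : ZMod m → V := fun i => F i.val with hg0
  have hbij : Function.Bijective g0 := by
    constructor
    · intro i j hij
      have h1 : i.val < T := by rw [hTcard]; exact ZMod.val_lt i
      have h2 : j.val < T := by rw [hTcard]; exact ZMod.val_lt j
      have := hinj i.val j.val h1 h2 hij
      exact ZMod.val_injective m this
    · intro v
      obtain ⟨k, hk⟩ := hsurj v
      refine ⟨(k : ZMod m), ?_⟩
      show F ((k : ZMod m)).val = v
      rw [← hval (k : ZMod m) k rfl]; exact hk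
  have hcast : ∀ i : ZMod m, ((i.val : ℕ) : ZMod m) = i := fun i =>
    ZMod.natCast_rightInverse i
  have hg1 : ∀ i : ZMod m, g0 (i + 1) = F (i.val + 1) := by
    intro i
    rw [hg0]
    exact (hval (i + 1) (i.val + 1) (by push_cast [hcast i]; ring)).symm
  have hgm1 : ∀ i : ZMod m, g0 (i - 1) = F (i.val + m - 1) := by
    intro i
    rw [hg0]
    refine (hval (i - 1) (i.val + m - 1) ?_).symm
    have h1 : (1 : ℕ) ≤ i.val + m := by omega
    push_cast [Nat.cast_sub h1, ZMod.natCast_self, hcast i]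
    ring
  have hadjg : ∀ i : ZMod m, H.Adj (g0 i) (g0 (i + 1)) := by
    intro i
    rw [hg1 i, hg0]
    exact hadjF i.val
  refine ⟨Equiv.ofBijective g0 hbij, ?_⟩
  intro i j
  constructor
  · intro hadj
    have hk : g0 i = F (i.val + m) := by
      rw [hg0]
      exact hFmod _ _ (Nat.add_mod_right i.val m).symm
    set k := i.val + m with hkdef
    have hk1 : 1 ≤ k := by omega
    have hb := hback (k - 1)
    rw [show k - 1 + 1 = k by omega, show k - 1 + 2 = k + 1 by omega] at hb
    have hmem := (hNbr (F k) (F (k + 1)) (hadjF k) (Equiv.ofBijective g0 hbij j)).mp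
      (by rw [← hk]; exact hadj)
    rw [← hb] at hmem
    have hkp : F (k + 1) = g0 (i + 1) := by
      rw [hg1 i]
      refine hFmod (k + 1) (i.val + 1) ?_
      rw [show k + 1 = (i.val + 1) + m by rw [hkdef]; ring, Nat.add_mod_right]
    have hkm : F (k - 1) = g0 (i - 1) := by
      rw [hgm1 i]
    rcases hmem with h1 | h1
    · left
      rw [hkp] at h1
      exact hbij.1 h1
    · right
      rw [hkm] at h1
      have : j = i - 1 := hbij.1 h1
      rw [this]; ring
  · rintro (rfl | rfl)
    · exact hadjg i
    · exact (hadjg j).symm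

lemma cycle_aux_reflection {m : ℕ} [NeZero m] (hm2 : (2 : ZMod m) ≠ 0)
    {H : SimpleGraph V} (g : ZMod m ≃ V)
    (hg : ∀ i j, H.Adj (g i) (g j) ↔ (j = i + 1 ∨ i = j + 1))
    (σ : Equiv.Perm V) (hσH : ∀ u v : V, H.Adj u v → H.Adj (σ u) (σ v))
    (hσ1 : σ ≠ 1) {a : V} (ha : σ a = a) :
    ∀ v, σ v = g (g.symm a + g.symm a - g.symm v) := by
  classical
  set s : ZMod m ≃ ZMod m := (g.trans σ).trans g.symm with hs_def
  have hs_app : ∀ i, s i = g.symm (σ (g i)) := fun i => rfl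
  have hσg : ∀ i, σ (g i) = g (s i) := by
    intro i; rw [hs_app, Equiv.apply_symm_apply]
  have hs : ∀ i, s (i + 1) = s i + 1 ∨ s (i + 1) = s i - 1 := by
    intro i
    have h := hσH _ _ ((hg i (i + 1)).mpr (Or.inl rfl))
    rw [hσg, hσg] at h
    rcases (hg _ _).mp h with h1 | h1
    · exact Or.inl h1
    · exact Or.inr (by rw [h1]; ring)
  have hcast : ∀ i : ZMod m, ((i.val : ℕ) : ZMod m) = i := fun i =>
    ZMod.natCast_rightInverse i
  have plus : s 1 = s 0 + 1 → ∀ i, s i = s 0 + i := by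
    intro h1 i
    have key : ∀ k : ℕ, s (k : ZMod m) = s 0 + k ∧
        s ((k : ZMod m) + 1) = s 0 + k + 1 := by
      intro k
      induction k with
      | zero => exact ⟨by simp, by simpa using h1⟩
      | succ k ih =>
        obtain ⟨A, B⟩ := ih
        constructor
        · push_cast
          rw [← add_assoc, ← B]
        · push_cast
          rcases hs ((k : ZMod m) + 1) with h2 | h2
          · rw [h2, B]; ring
          · exfalso
            rw [B] at h2
            have : s ((k : ZMod m) + 1 + 1) = s (k : ZMod m) := by
              rw [h2, A]; ring
            have h3 := s.injective this
            have : (2 : ZMod m) = 0 := by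
              have := h3
              linear_combination this
            exact hm2 this
    rw [← hcast i]
    exact (key i.val).1
  have minus : s 1 = s 0 - 1 → ∀ i, s i = s 0 - i := by
    intro h1 i
    have key : ∀ k : ℕ, s (k : ZMod m) = s 0 - k ∧
        s ((k : ZMod m) + 1) = s 0 - k - 1 := by
      intro k
      induction k with
      | zero => exact ⟨by simp, by simpa using h1⟩
      | succ k ih =>
        obtain ⟨A, B⟩ := ih
        constructor
        · push_cast
          rw [B]; ring
        · push_cast
          rcases hs ((k : ZMod m) + 1) with h2 | h2
          · exfalso
            rw [B] at h2
            have : s ((k : ZMod m) + 1 + 1) = s (k : ZMod m) := by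
              rw [h2, A]; ring
            have h3 := s.injective this
            have : (2 : ZMod m) = 0 := by linear_combination h3
            exact hm2 this
          · rw [h2, B]; ring
    rw [← hcast i]
    exact (key i.val).1
  have hsz : s (g.symm a) = g.symm a := by
    rw [hs_app, Equiv.apply_symm_apply, ha]
  have h01 : s (0 + 1) = s 1 := by norm_num
  rcases hs 0 with h1 | h1 <;> rw [h01] at h1
  · exfalso
    have hall := plus h1
    have hz := hsz
    rw [hall (g.symm a)] at hz
    have hs0 : s 0 = 0 := by linear_combination hz
    apply hσ1
    ext v
    have : σ (g (g.symm v)) = g (s (g.symm v)) := hσg _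
    rw [Equiv.apply_symm_apply] at this
    rw [this, hall, hs0, zero_add, Equiv.apply_symm_apply]
    rfl
  · have hall := minus h1
    have hz := hsz
    rw [hall (g.symm a)] at hz
    have hs0 : s 0 = g.symm a + g.symm a := by linear_combination hz
    intro v
    have : σ (g (g.symm v)) = g (s (g.symm v)) := hσg _
    rw [Equiv.apply_symm_apply] at this
    rw [this, hall, hs0]

lemma fixed_cycle_structure [Fintype V] {n : ℕ} (hV : Fintype.card V = 2 * n + 1)
    (hn : 1 ≤ n) {H : SimpleGraph V} (hconn : H.Connected)
    (hreg : ∀ v : V, (H.neighborSet v).ncard = 2)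
    (π : Equiv.Perm V) (hπH : ∀ u v : V, H.Adj u v → H.Adj (π u) (π v))
    (hπ1 : π ≠ 1) {a : V} (ha : π a = a) :
    (∀ v, π v = v → v = a) ∧
    (∃ x y : V, x ≠ y ∧ x ≠ a ∧ y ≠ a ∧ π x = y ∧ π y = x ∧ H.Adj x y ∧
      ∀ x' : V, H.Adj x' (π x') → x' = x ∨ x' = y) ∧
    (∀ ρ : Equiv.Perm V, (∀ u v : V, H.Adj u v → H.Adj (ρ u) (ρ v)) → ρ ≠ 1 →
      ρ a = a → ρ = π) := by
  classical
  haveI : NeZero (Fintype.card V) := ⟨by omega⟩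
  haveI : Fact (1 < Fintype.card V) := ⟨by omega⟩
  have hm2 : (2 : ZMod (Fintype.card V)) ≠ 0 := by
    intro h
    have : ((2 : ℕ) : ZMod (Fintype.card V)) = 0 := by push_cast; exact h
    have hdvd := (ZMod.natCast_eq_zero_iff 2 (Fintype.card V)).mp this
    have := Nat.le_of_dvd (by norm_num) hdvd
    omega
  have h2unit : IsUnit (2 : ZMod (Fintype.card V)) := by
    have : IsUnit ((2 : ℕ) : ZMod (Fintype.card V)) := by
      rw [ZMod.isUnit_iff_coprime, Nat.Prime.coprime_iff_not_dvd Nat.prime_two]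
      omega
    simpa using this
  have h2cancel : ∀ x y : ZMod (Fintype.card V), x + x = y + y → x = y := by
    intro x y hxy
    have h2 : (2 : ZMod (Fintype.card V)) * x = 2 * y := by
      rw [two_mul, two_mul]; exact hxy
    exact h2unit.mul_left_cancel h2
  obtain ⟨g, hg⟩ := cycle_aux_exists_cycle_equiv hconn hreg
  set z := g.symm a with hz
  have hπv := cycle_aux_reflection hm2 g hg π hπH hπ1 ha
  -- fixed points
  have hfix : ∀ v, π v = v → v = a := by
    intro v hv
    have h1 : g (z + z - g.symm v) = g (g.symm v) := by
      rw [← hπv v, hv, Equiv.apply_symm_apply]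
    have h2 := g.injective h1
    have h3 : g.symm v + g.symm v = z + z := by linear_combination -h2
    have h4 := h2cancel _ _ h3
    have : v = g z := by rw [← h4, Equiv.apply_symm_apply]
    rw [this, hz, Equiv.apply_symm_apply]
  refine ⟨hfix, ?_, ?_⟩
  · -- the flipped edge
    obtain ⟨u, hu⟩ := h2unit
    set t : ZMod (Fintype.card V) := (↑u⁻¹ : ZMod (Fintype.card V)) with ht
    have htt : t * 2 = 1 := by
      rw [ht, ← hu]
      exact u.inv_mul
    set i₁ := t * (z + z - 1) with hi₁
    set i₂ := i₁ + 1 with hi₂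
    have hkey₁ : i₁ + i₁ = z + z - 1 := by
      have : (2 : ZMod (Fintype.card V)) * i₁ = (2 * t) * (z + z - 1) := by
        rw [hi₁]; ring
      rw [mul_comm 2 t, htt, one_mul] at this
      linear_combination this
    have hrefl₁ : z + z - i₁ = i₂ := by rw [hi₂]; linear_combination -hkey₁
    have hrefl₂ : z + z - i₂ = i₁ := by rw [hi₂]; linear_combination -hkey₁
    have hne12 : i₁ ≠ i₂ := by
      rw [hi₂]; intro h; exact one_ne_zero (by linear_combination -h)
    have hπ₁ : π (g i₁) = g i₂ := by rw [hπv, Equiv.symm_apply_apply, hrefl₁]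
    have hπ₂ : π (g i₂) = g i₁ := by rw [hπv, Equiv.symm_apply_apply, hrefl₂]
    have hgne : g i₁ ≠ g i₂ := fun h => hne12 (g.injective h)
    have hxa : g i₁ ≠ a := by
      intro h
      rw [h] at hπ₁
      rw [ha] at hπ₁
      exact hgne (h.trans hπ₁)
    have hya : g i₂ ≠ a := by
      intro h
      rw [h, ha] at hπ₂
      exact hxa hπ₂.symm
    refine ⟨g i₁, g i₂, hgne, hxa, hya, hπ₁, hπ₂, (hg i₁ i₂).mpr (Or.inl hi₂), ?_⟩
    intro x' hx'
    have hx'' : H.Adj (g (g.symm x')) (g (z + z - g.symm x')) := by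
      rw [Equiv.apply_symm_apply, ← hπv]; exact hx'
    set i := g.symm x' with hi
    rcases (hg _ _).mp hx'' with h1 | h1
    · left
      have hii : i + i = z + z - 1 := by linear_combination -h1
      have hii2 : i = i₁ := h2cancel i i₁ (by rw [hii, hkey₁])
      rw [← hii2]
      exact (g.apply_symm_apply x').symm
    · right
      have hii : i + i = z + z + 1 := by linear_combination h1
      have hi2' : i₂ + i₂ = z + z + 1 := by rw [hi₂]; linear_combination hkey₁
      have hii2 : i = i₂ := h2cancel i i₂ (by rw [hii, hi2'])
      rw [← hii2]
      exact (g.apply_symm_apply x').symm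
  · -- uniqueness
    intro ρ hρH hρ1 hρa
    have hρv := cycle_aux_reflection hm2 g hg ρ hρH hρ1 hρa
    ext v
    rw [hρv, hπv]

lemma perm_smul_adj (π : Equiv.Perm V) (G : SimpleGraph V) (u v : V) :
    (π • G).Adj (π u) (π v) ↔ G.Adj u v := by
  rw [perm_smul_graph]
  simp only [SimpleGraph.map_adj, Equiv.coe_toEmbedding]
  constructor
  · rintro ⟨-, x, y, hxy, hx, hy⟩
    rwa [← π.injective hx, ← π.injective hy]
  · intro h
    exact ⟨fun e => h.ne (π.injective e), u, v, h, rfl, rfl⟩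


/-- two involutory automorphisms of an HCS of odd order with a common fixed
point coincide (so distinct involutions have distinct fixed points). -/
theorem involutions_distinct_fixed_points [Fintype V] (n : ℕ)
    (hV : Fintype.card V = 2 * n + 1)
    (𝓗 : Set (SimpleGraph V)) (h : IsHCS 𝓗) (σ τ : Equiv.Perm V)
    (hσm : σ ∈ autHCS 𝓗) (hτm : τ ∈ autHCS 𝓗)
    (hσ : orderOf σ = 2) (hτ : orderOf τ = 2)
    (a : V) (ha : σ a = a) (hb : τ a = a) : σ = τ := by
  classical
  obtain ⟨hcyc, hpart⟩ := h
  -- trivial case n = 0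
  rcases Nat.eq_zero_or_pos n with rfl | hn
  · haveI : Subsingleton V := by
      rw [← Fintype.card_le_one_iff_subsingleton, hV]
    ext v
    exact Subsingleton.elim _ _
  -- basic facts about involutions
  have hinv : ∀ π : Equiv.Perm V, orderOf π = 2 → (π ≠ 1 ∧ ∀ x, π (π x) = x) := by
    intro π hπ2
    constructor
    · intro h1
      rw [h1, orderOf_one] at hπ2
      omega
    · intro x
      have : π ^ 2 = 1 := by rw [← hπ2]; exact pow_orderOf_eq_one π
      have h2 : (π ^ 2) x = x := by rw [this]; rfl
      rwa [sq, Equiv.Perm.mul_apply] at h2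
  obtain ⟨hσ1, hσ2⟩ := hinv σ hσ
  obtain ⟨hτ1, hτ2⟩ := hinv τ hτ
  -- stabilizer facts
  have hsmulmem : ∀ π : Equiv.Perm V, π ∈ autHCS 𝓗 → ∀ H ∈ 𝓗, π • H ∈ 𝓗 := by
    intro π hπ H hH
    have h1 : π • 𝓗 = 𝓗 := hπ
    rw [← h1]
    exact Set.smul_mem_smul_set hH
  -- unique cycle through an edge
  have huniq : ∀ x y : V, x ≠ y → ∃! H, H ∈ 𝓗 ∧ H.Adj x y := by
    intro x y hxy
    have h1 : s(x, y) ∈ (⊤ : SimpleGraph V).edgeSet := by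
      rw [SimpleGraph.mem_edgeSet]
      exact hxy
    obtain ⟨H, ⟨hH1, hH2⟩, hH3⟩ := hpart _ h1
    refine ⟨H, ⟨hH1, hH2⟩, ?_⟩
    intro G ⟨hG1, hG2⟩
    exact hH3 G ⟨hG1, hG2⟩
  -- a fixed cycle through each flipped edge
  have hfixcyc : ∀ π : Equiv.Perm V, π ∈ autHCS 𝓗 → (∀ x, π (π x) = x) →
      ∀ x, π x ≠ x → ∃ H ∈ 𝓗, H.Adj x (π x) ∧ π • H = H ∧
        ∀ G ∈ 𝓗, G.Adj x (π x) → G = H := by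
    intro π hπm hπ2 x hx
    obtain ⟨H, ⟨hH1, hH2⟩, hH3⟩ := huniq x (π x) (Ne.symm hx)
    refine ⟨H, hH1, hH2, ?_, fun G hG1 hG2 => hH3 G ⟨hG1, hG2⟩⟩
    apply hH3
    refine ⟨hsmulmem π hπm H hH1, ?_⟩
    have h1 : (π • H).Adj (π x) (π (π x)) := (perm_smul_adj π H x (π x)).mpr hH2
    rw [hπ2 x] at h1
    exact h1.symm
  -- automorphism property from a fixed cycle
  have hautadj : ∀ π : Equiv.Perm V, ∀ H : SimpleGraph V, π • H = H →
      ∀ u v : V, H.Adj u v → H.Adj (π u) (π v) := by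
    intro π H hπH u v huv
    have := (perm_smul_adj π H u v).mpr huv
    rwa [hπH] at this
  -- σ has a fixed cycle, hence exactly one fixed point
  have hσx : ∃ x, σ x ≠ x := by
    by_contra hcon
    push_neg at hcon
    exact hσ1 (Equiv.ext hcon)
  obtain ⟨x₀, hx₀⟩ := hσx
  obtain ⟨H₁, hH₁mem, hH₁adj, hH₁fix, hH₁u⟩ := hfixcyc σ hσm hσ2 x₀ hx₀
  have hH₁ham := hcyc H₁ hH₁mem
  obtain ⟨hσfix, -, hσuniq⟩ := fixed_cycle_structure hV hn hH₁ham.1 hH₁ham.2 σ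
    (hautadj σ H₁ hH₁fix) hσ1 ha
  -- τ has a fixed cycle, hence exactly one fixed point
  have hτx : ∃ x, τ x ≠ x := by
    by_contra hcon
    push_neg at hcon
    exact hτ1 (Equiv.ext hcon)
  obtain ⟨y₀, hy₀⟩ := hτx
  obtain ⟨H₂, hH₂mem, hH₂adj, hH₂fix, hH₂u⟩ := hfixcyc τ hτm hτ2 y₀ hy₀
  have hH₂ham := hcyc H₂ hH₂mem
  obtain ⟨hτfix, -, -⟩ := fixed_cycle_structure hV hn hH₂ham.1 hH₂ham.2 τ
    (hautadj τ H₂ hH₂fix) hτ1 hb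
  -- the counting argument: τ fixes every cycle of the system
  have hτmoves : ∀ x : V, x ≠ a → τ x ≠ x := by
    intro x hx hcon
    exact hx (hτfix x hcon)
  -- finite set versions
  have h𝓗fin : 𝓗.Finite := Set.toFinite 𝓗
  set 𝓗f : Finset (SimpleGraph V) := h𝓗fin.toFinset with h𝓗f
  have hmem𝓗f : ∀ G, G ∈ 𝓗f ↔ G ∈ 𝓗 := fun G => h𝓗fin.mem_toFinset
  set A : Finset V := Finset.univ.erase a with hA
  have hAcard : A.card = 2 * n := by
    rw [hA, Finset.card_erase_of_mem (Finset.mem_univ a), Finset.card_univ, hV]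
    omega
  -- the function assigning to x ≠ a the cycle through {a, x}
  have hDex : ∀ x : V, x ≠ a → ∃! H, H ∈ 𝓗 ∧ H.Adj a x := fun x hx =>
    huniq a x (Ne.symm hx)
  set D : V → SimpleGraph V := fun x =>
    if hx : x ≠ a then (hDex x hx).choose else ⊤ with hD
  have hD1 : ∀ x (hx : x ≠ a), D x ∈ 𝓗 ∧ (D x).Adj a x := by
    intro x hx
    rw [hD]
    simp only [dif_pos hx]
    exact (hDex x hx).choose_spec.1
  have hD2 : ∀ x (hx : x ≠ a) (G : SimpleGraph V), G ∈ 𝓗 → G.Adj a x → G = D x := by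
    intro x hx G hG1 hG2
    rw [hD]
    simp only [dif_pos hx]
    exact (hDex x hx).choose_spec.2 G ⟨hG1, hG2⟩
  -- counting 1: |𝓗| = n
  have hcount1 : A.card = ∑ G ∈ 𝓗f, (A.filter (fun x => D x = G)).card := by
    apply Finset.card_eq_sum_card_fiberwise
    intro x hx
    have hxa : x ≠ a := Finset.ne_of_mem_erase hx
    rw [Finset.mem_coe, hmem𝓗f]
    exact (hD1 x hxa).1
  have hfib1 : ∀ G ∈ 𝓗f, (A.filter (fun x => D x = G)).card = 2 := by
    intro G hG
    rw [hmem𝓗f] at hG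
    have hGham := hcyc G hG
    have : A.filter (fun x => D x = G) = G.neighborFinset a := by
      ext x
      rw [Finset.mem_filter, SimpleGraph.mem_neighborFinset]
      constructor
      · rintro ⟨hxA, hxD⟩
        have hxa : x ≠ a := Finset.ne_of_mem_erase hxA
        have := (hD1 x hxa).2
        rwa [hxD] at this
      · intro hadj
        have hxa : x ≠ a := fun hc => G.irrefl (hc ▸ hadj)
        exact ⟨by rw [hA]; exact Finset.mem_erase.mpr ⟨hxa, Finset.mem_univ x⟩,
          (hD2 x hxa G hG hadj).symm⟩
    rw [this]
    have h2 := hGham.2 a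
    rw [Set.ncard_eq_toFinset_card'] at h2
    rw [SimpleGraph.neighborFinset_def]
    convert h2 using 2
  have hcard𝓗 : 𝓗f.card = n := by
    have h1 : A.card = 2 * 𝓗f.card := by
      rw [hcount1, Finset.sum_congr rfl hfib1, Finset.sum_const, smul_eq_mul, mul_comm]
    omega
  -- counting 2: τ-fixed cycles
  set Cτ : V → SimpleGraph V := fun x =>
    if hx : τ x ≠ x then ((huniq x (τ x) (Ne.symm hx)).choose) else ⊤ with hCτ
  have hC1 : ∀ x (hx : τ x ≠ x), Cτ x ∈ 𝓗 ∧ (Cτ x).Adj x (τ x) := by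
    intro x hx
    rw [hCτ]
    simp only [dif_pos hx]
    exact (huniq x (τ x) (Ne.symm hx)).choose_spec.1
  have hC2 : ∀ x (hx : τ x ≠ x) (G : SimpleGraph V), G ∈ 𝓗 → G.Adj x (τ x) → G = Cτ x := by
    intro x hx G hG1 hG2
    rw [hCτ]
    simp only [dif_pos hx]
    exact (huniq x (τ x) (Ne.symm hx)).choose_spec.2 G ⟨hG1, hG2⟩
  have hCfixed : ∀ x (hx : τ x ≠ x), τ • Cτ x = Cτ x := by
    intro x hx
    obtain ⟨hCmem, hCadj⟩ := hC1 x hx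
    apply hC2 x hx
    · exact hsmulmem τ hτm _ hCmem
    · have h1 : (τ • Cτ x).Adj (τ x) (τ (τ x)) := (perm_smul_adj τ _ x (τ x)).mpr hCadj
      rw [hτ2 x] at h1
      exact h1.symm
  set Fτ : Finset (SimpleGraph V) := 𝓗f.filter (fun G => τ • G = G) with hFτ
  have hcount2 : A.card = ∑ G ∈ Fτ, (A.filter (fun x => Cτ x = G)).card := by
    apply Finset.card_eq_sum_card_fiberwise
    intro x hx
    have hxa : x ≠ a := Finset.ne_of_mem_erase hx
    have hxm := hτmoves x hxa
    rw [hFτ, Finset.mem_coe, Finset.mem_filter, hmem𝓗f]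
    exact ⟨(hC1 x hxm).1, hCfixed x hxm⟩
  have hfib2 : ∀ G ∈ Fτ, (A.filter (fun x => Cτ x = G)).card = 2 := by
    intro G hG
    rw [hFτ, Finset.mem_filter, hmem𝓗f] at hG
    obtain ⟨hGmem, hGfix⟩ := hG
    have hGham := hcyc G hGmem
    obtain ⟨-, ⟨p, q, hpq, hpa, hqa, hτpq, hτqp, hGadj, hGonly⟩, -⟩ :=
      fixed_cycle_structure hV hn hGham.1 hGham.2 τ (hautadj τ G hGfix) hτ1 hb
    have hset : A.filter (fun x' => Cτ x' = G) = {p, q} := by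
      ext x'
      rw [Finset.mem_filter, Finset.mem_insert, Finset.mem_singleton]
      constructor
      · rintro ⟨hx'A, hx'C⟩
        have hx'a : x' ≠ a := Finset.ne_of_mem_erase hx'A
        have hx'm := hτmoves x' hx'a
        have := (hC1 x' hx'm).2
        rw [hx'C] at this
        exact hGonly x' this
      · intro hx'
        rcases hx' with h | h
        · rw [h]
          refine ⟨Finset.mem_erase.mpr ⟨hpa, Finset.mem_univ p⟩, ?_⟩
          have hpm : τ p ≠ p := by rw [hτpq]; exact Ne.symm hpq
          exact (hC2 p hpm G hGmem (by rwa [hτpq])).symm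
        · rw [h]
          refine ⟨Finset.mem_erase.mpr ⟨hqa, Finset.mem_univ q⟩, ?_⟩
          have hqm : τ q ≠ q := by rw [hτqp]; exact hpq
          exact (hC2 q hqm G hGmem (by rw [hτqp]; exact hGadj.symm)).symm
    rw [hset, Finset.card_insert_of_notMem (by simpa using hpq), Finset.card_singleton]
  have hcardFτ : Fτ.card = n := by
    have h1 : A.card = 2 * Fτ.card := by
      rw [hcount2, Finset.sum_congr rfl hfib2, Finset.sum_const, smul_eq_mul, mul_comm]
    omega
  have hFτall : Fτ = 𝓗f := by
    apply Finset.eq_of_subset_of_card_le (Finset.filter_subset _ _)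
    rw [hcard𝓗, hcardFτ]
  -- τ fixes H₁, hence τ is the reflection of H₁ at a, which is σ
  have hτH₁ : τ • H₁ = H₁ := by
    have : H₁ ∈ Fτ := by
      rw [hFτall, hmem𝓗f]
      exact hH₁mem
    rw [hFτ, Finset.mem_filter] at this
    exact this.2
  exact (hσuniq τ (hautadj τ H₁ hτH₁) hτ1 hb).symm
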